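/- arXiv:1309.5563 — 2 statements merged into one kernel-verified Lean document; each statement's English description precedes it below -/
import Mathlib

section
/- Fix an integer N > 2, set κ_N = (−1)^{1+N/2} if N is even and fix κ_N ∈ {−1,+1} if N is odd. Let θ_1,…,θ_N be the N distinct N-th roots of κ_N, J = {ℓ : Re θ_ℓ > 0}, K = {ℓ : Re θ_ℓ < 0}, and A_j = ∏_{ℓ∈J∖{j}} θ_ℓ/(θ_ℓ − θ_j) for j ∈ J. Then Σ_{j∈J} A_j θ_j^{−#K} = 1, where #K is the cardinality of K. -/
open Finset Complex Polynomial

private lemma lag_eval_zero (s : Finset ℂ) (f : ℂ[X]) (hf : f.degree < s.card) :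
    ∑ z ∈ s, f.eval z * ∏ w ∈ s.erase z, w / (w - z) = f.eval 0 := by
  have hs : Set.InjOn id (s : Set ℂ) := Set.injOn_id _
  conv_rhs => rw [Lagrange.eq_interpolate hs hf]
  rw [Lagrange.interpolate_apply, Polynomial.eval_finset_sum]
  refine Finset.sum_congr rfl fun z hz => ?_
  rw [eval_mul, eval_C]
  congr 1
  rw [Lagrange.basis, Polynomial.eval_prod]
  refine Finset.prod_congr rfl fun w hw => ?_
  have hwz : w ≠ z := (Finset.mem_erase.mp hw).1
  rw [Lagrange.basisDivisor, eval_mul, eval_C, eval_sub, eval_X, eval_C]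
  have h1 : (z : ℂ) - w ≠ 0 := sub_ne_zero.mpr (Ne.symm hwz)
  have h2 : (w : ℂ) - z ≠ 0 := sub_ne_zero.mpr hwz
  simp only [id]
  field_simp
  ring

/-- With `θ_1,…,θ_N` the `N` distinct `N`-th roots of `κ_N`,
`J = {ℓ : Re θ_ℓ > 0}`, `K = {ℓ : Re θ_ℓ < 0}` and
`A_j = ∏_{ℓ∈J∖{j}} θ_ℓ/(θ_ℓ − θ_j)`, one has `Σ_{j∈J} A_j θ_j^{−#K} = 1`. -/
theorem alpha_neg_cardK_eq_one (N : ℕ) (hN : 2 < N) (κ : ℂ)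
    (hκeven : Even N → κ = (-1 : ℂ) ^ (1 + N / 2))
    (hκodd : ¬ Even N → κ = 1 ∨ κ = -1)
    (θ : Fin N → ℂ) (hinj : Function.Injective θ) (hroot : ∀ i, θ i ^ N = κ) :
    ∑ j ∈ Finset.univ.filter (fun i => 0 < (θ i).re),
        (∏ ℓ ∈ (Finset.univ.filter (fun i => 0 < (θ i).re)).erase j,
            θ ℓ / (θ ℓ - θ j)) *
          θ j ^ (-((Finset.univ.filter (fun i => (θ i).re < 0)).card : ℤ))
      = 1 := by
  have hN0 : 0 < N := by omega
  have hNne : N ≠ 0 := by omega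
  -- κ is ±1
  have hκ : κ = 1 ∨ κ = -1 := by
    by_cases hE : Even N
    · rw [hκeven hE]
      rcases Nat.even_or_odd (1 + N / 2) with h | h
      · left; exact h.neg_one_pow
      · right; exact h.neg_one_pow
    · exact hκodd hE
  have hκ0 : κ ≠ 0 := by rcases hκ with h | h <;> rw [h] <;> norm_num
  have hκconj : (starRingEnd ℂ) κ = κ := by rcases hκ with h | h <;> rw [h] <;> simp
  have hκsq : κ ^ 2 = 1 := by rcases hκ with h | h <;> rw [h] <;> norm_num
  -- the finset of roots
  set T : Finset ℂ := Finset.univ.image θ with hT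
  have hTcard : T.card = N := by
    rw [hT, Finset.card_image_of_injective _ hinj, Finset.card_univ, Fintype.card_fin]
  set p : ℂ[X] := X ^ N - C κ with hp
  have hpmonic : p.Monic := monic_X_pow_sub_C κ hNne
  have hpne : p ≠ 0 := hpmonic.ne_zero
  have hpdeg : p.natDegree = N := by
    rw [hp, natDegree_X_pow_sub_C]
  have hrootscard : Multiset.card p.roots = N := by
    have := (Polynomial.splits_iff_card_roots (f := p)).mp (IsAlgClosed.splits p)
    rw [hpdeg] at this; exact this
  have hmemT : ∀ z ∈ T, z ^ N = κ := by
    intro z hz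
    rw [hT, Finset.mem_image] at hz
    obtain ⟨i, _, rfl⟩ := hz
    exact hroot i
  have hTroots : p.roots = T.val := by
    have hle : T.val ≤ p.roots := by
      refine Multiset.le_iff_count.mpr fun z => ?_
      by_cases hz : z ∈ T
      · have h1 : Multiset.count z T.val = 1 := by
          rw [Multiset.count_eq_one_of_mem T.nodup hz]
        rw [h1]
        rw [Multiset.one_le_count_iff_mem]
        rw [Polynomial.mem_roots hpne]
        show p.eval z = 0
        rw [hp]
        simp [hmemT z hz]
      · rw [Multiset.count_eq_zero_of_notMem (by simpa using hz)]
        exact Nat.zero_le _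
    have hc : Multiset.card T.val = N := hTcard
    exact (Multiset.eq_of_le_of_card_le hle (by rw [hrootscard, hc])).symm
  have hTmem : ∀ z, z ∈ T ↔ z ^ N = κ := by
    intro z
    constructor
    · exact hmemT z
    · intro h
      have : z ∈ p.roots := by
        rw [Polynomial.mem_roots hpne]
        show p.eval z = 0
        rw [hp]; simp [h]
      rwa [hTroots, ← Finset.mem_def] at this
  have hconjT : ∀ z ∈ T, (starRingEnd ℂ) z ∈ T := by
    intro z hz
    rw [hTmem] at hz ⊢
    rw [← map_pow, hz, hκconj]
  have hz0 : ∀ z ∈ T, z ≠ 0 := by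
    intro z hz h0
    rw [hTmem z] at hz
    rw [h0, zero_pow hNne] at hz
    exact hκ0 hz.symm
  have habs1 : ∀ z ∈ T, z * (starRingEnd ℂ) z = 1 := by
    intro z hz
    rw [Complex.mul_conj]
    have h1 : ((Complex.normSq z : ℝ) : ℂ) ^ N = 1 := by
      rw [← Complex.ofReal_pow]
      have : (Complex.normSq z) ^ N = Complex.normSq (z ^ N) := by
        rw [map_pow]
      rw [this, hTmem z |>.mp hz]
      rcases hκ with h | h <;> rw [h] <;> simp
    have h2 : (Complex.normSq z) ^ N = 1 := by
      exact_mod_cast h1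
    have h3 : Complex.normSq z = 1 :=
      (pow_left_inj₀ (Complex.normSq_nonneg z) zero_le_one hNne).mp (by rw [h2, one_pow])
    rw [h3]; norm_num
  -- no purely imaginary roots
  have hre0 : ∀ z ∈ T, z.re ≠ 0 := by
    intro z hz hre
    have hns : Complex.normSq z = 1 := by
      have := habs1 z hz
      rw [Complex.mul_conj] at this
      exact_mod_cast this
    have him : z.im ^ 2 = 1 := by
      rw [Complex.normSq_apply, hre] at hns
      nlinarith [hns]
    have hsq : z ^ 2 = -1 := by
      have hzeq : z = (z.im : ℂ) * Complex.I := by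
        apply Complex.ext <;> simp [hre]
      rw [hzeq, mul_pow, Complex.I_sq, ← Complex.ofReal_pow, him]
      simp
    have hzN : z ^ N = κ := (hTmem z).mp hz
    by_cases hE : Even N
    · obtain ⟨m, hm⟩ := hE
      have hNm : N = 2 * m := by omega
      have h1 : z ^ N = (-1 : ℂ) ^ m := by
        rw [hNm, pow_mul, hsq]
      have h2 : N / 2 = m := by omega
      rw [hκeven ⟨m, hm⟩, h2, pow_add, pow_one] at hzN
      rw [h1] at hzN
      have hcon : (2 : ℂ) * (-1) ^ m = 0 := by linear_combination hzN
      have hne : (-1 : ℂ) ^ m ≠ 0 := pow_ne_zero _ (by norm_num)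
      rw [mul_eq_zero] at hcon
      rcases hcon with h | h
      · norm_num at h
      · exact hne h
    · have hodd : Odd N := Nat.not_even_iff_odd.mp hE
      have h1 : z ^ (2 * N) = κ ^ 2 := by
        rw [mul_comm, pow_mul, hzN]
      have h2 : z ^ (2 * N) = (-1 : ℂ) ^ N := by
        rw [pow_mul, hsq]
      rw [hκsq, h2, hodd.neg_one_pow] at h1
      norm_num at h1
  classical
  -- J and K as subsets of ℂ
  set J : Finset ℂ := T.filter (fun z => 0 < z.re) with hJ
  set K : Finset ℂ := T.filter (fun z => z.re < 0) with hK
  have hKnot : T.filter (fun z => ¬ 0 < z.re) = K := by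
    rw [hK]
    apply Finset.filter_congr
    intro z hz
    have := hre0 z hz
    constructor
    · intro h; simp only [not_lt] at h; exact lt_of_le_of_ne h this
    · intro h; simp only [not_lt]; exact le_of_lt h
  have hcards : J.card + K.card = N := by
    rw [← hTcard, hJ, ← hKnot]
    exact Finset.card_filter_add_card_filter_not _
  -- total product
  have hpeq : p = ∏ z ∈ T, (X - C z) := by
    have := (IsAlgClosed.splits p).eq_prod_roots_of_monic
      hpmonic
    rw [hTroots] at this
    rw [this]
    rfl
  have hprodT : ∏ z ∈ T, (-z) = -κ := by
    have h0 : p.eval 0 = -κ := by rw [hp]; simp [zero_pow hNne]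
    rw [hpeq, Polynomial.eval_prod] at h0
    simp only [eval_sub, eval_X, eval_C, zero_sub] at h0
    exact h0
  -- sum of roots is zero
  have hsumT : ∑ z ∈ T, z = 0 := by
    have h1 : p.nextCoeff = -∑ z ∈ T, z := by
      rw [hpeq]
      exact Polynomial.prod_X_sub_C_nextCoeff _
    have h2 : p.nextCoeff = 0 := by
      rw [Polynomial.nextCoeff_of_natDegree_pos (by omega), hpdeg, hp]
      simp only [coeff_sub, coeff_X_pow, if_neg (by omega : ¬ N - 1 = N)]
      rw [Polynomial.coeff_C, if_neg (by omega : ¬ N - 1 = 0)]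
      ring
    exact neg_eq_zero.mp (h1.symm.trans h2)
  -- J is nonempty
  have hJne : J.Nonempty := by
    by_contra hJe
    rw [Finset.not_nonempty_iff_eq_empty] at hJe
    have hallneg : ∀ z ∈ T, z.re < 0 := by
      intro z hz
      by_contra hle
      have h1 : 0 < z.re := lt_of_le_of_ne (not_lt.mp hle) (Ne.symm (hre0 z hz))
      have : z ∈ J := Finset.mem_filter.mpr ⟨hz, h1⟩
      rw [hJe] at this
      exact absurd this (Finset.notMem_empty z)
    have hTne : T.Nonempty := Finset.card_pos.mp (by rw [hTcard]; omega)
    have hlt : ∑ z ∈ T, z.re < ∑ z ∈ T, (0 : ℝ) :=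
      Finset.sum_lt_sum_of_nonempty hTne hallneg
    rw [Finset.sum_const_zero, ← Complex.re_sum, hsumT] at hlt
    simp at hlt
  -- product over K is 1
  have hprodK : ∏ z ∈ K, (-z) = 1 := by
    refine Finset.prod_involution (fun z _ => (starRingEnd ℂ) z) ?_ ?_ ?_ ?_
    · intro z hz
      have := habs1 z (Finset.mem_filter.mp hz).1
      rw [neg_mul_neg]
      exact this
    · intro z hz hne heq
      replace heq : (starRingEnd ℂ) z = z := heq
      apply hne
      have hzre : z.re < 0 := (Finset.mem_filter.mp hz).2
      have hzim : z.im = 0 := by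
        have := congrArg Complex.im heq
        simp only [Complex.conj_im] at this
        linarith
      have hns : z * (starRingEnd ℂ) z = 1 := habs1 z (Finset.mem_filter.mp hz).1
      rw [heq] at hns
      have hz2 : z * z = 1 := hns
      have : z = 1 ∨ z = -1 := mul_self_eq_one_iff.mp hz2
      rcases this with h | h
      · rw [h] at hzre; norm_num at hzre
      · rw [h]; norm_num
    · intro z hz
      show (starRingEnd ℂ) z ∈ K
      rw [hK, Finset.mem_filter] at hz ⊢
      exact ⟨hconjT z hz.1, by simpa using hz.2⟩
    · intro z hz
      simp
  -- product over J is -κ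
  have hprodJ : ∏ z ∈ J, (-z) = -κ := by
    have := Finset.prod_filter_mul_prod_filter_not T (fun z => 0 < z.re) (fun z => -z)
    rw [hKnot, ← hJ, hprodT, hprodK, mul_one] at this
    exact this
  set n : ℕ := J.card with hn
  have hn0 : n ≠ 0 := by
    have := Finset.card_pos.mpr hJne
    omega
  -- the auxiliary polynomial
  set q : ℂ[X] := X ^ n - ∏ z ∈ J, (X - C z) with hq
  have hqprod_monic : (∏ z ∈ J, (X - C z : ℂ[X])).Monic :=
    monic_prod_of_monic _ _ fun z _ => monic_X_sub_C z
  have hdegprod : (∏ z ∈ J, (X - C z : ℂ[X])).degree = (n : ℕ) := by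
    rw [Polynomial.degree_prod]
    simp only [Polynomial.degree_X_sub_C]
    rw [Finset.sum_const, hn]
    simp [Nat.smul_one_eq_cast]
  have hqdeg : q.degree < (J.card : WithBot ℕ) := by
    have h1 : ((X : ℂ[X]) ^ n).degree = (n : ℕ) := Polynomial.degree_X_pow n
    have := Polynomial.degree_sub_lt (h1.trans hdegprod.symm)
      (pow_ne_zero n Polynomial.X_ne_zero) ?_
    · rw [hq]
      calc q.degree < ((X : ℂ[X]) ^ n).degree := this
        _ = (n : ℕ) := h1
        _ = (J.card : WithBot ℕ) := by rw [hn]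
    · rw [Polynomial.leadingCoeff_X_pow, hqprod_monic.leadingCoeff]
  have heval : ∀ z ∈ J, q.eval z = z ^ n := by
    intro z hz
    rw [hq]
    simp only [eval_sub, eval_pow, eval_X]
    rw [Polynomial.eval_prod, Finset.prod_eq_zero hz (by simp), sub_zero]
  have heval0 : q.eval 0 = κ := by
    rw [hq]
    simp only [eval_sub, eval_pow, eval_X]
    rw [zero_pow hn0, Polynomial.eval_prod]
    have hpr : ∏ z ∈ J, Polynomial.eval 0 (X - C z) = -κ := by
      rw [← hprodJ]
      exact Finset.prod_congr rfl fun z _ => by simp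
    rw [hpr]
    ring
  -- translate to sums over J
  have himage : (Finset.univ.filter fun i => 0 < (θ i).re).image θ = J := by
    rw [hJ, hT, Finset.filter_image]
  have hKcard : (Finset.univ.filter fun i => (θ i).re < 0).card = K.card := by
    rw [hK, hT, Finset.filter_image, Finset.card_image_of_injective _ hinj]
  have hstep : ∀ z ∈ J, z ^ (-(K.card : ℤ)) = z ^ n / κ := by
    intro z hz
    have hzT : z ∈ T := (Finset.mem_filter.mp hz).1
    have hzne : z ≠ 0 := hz0 z hzT
    have hzκ : z ^ N = κ := hmemT z hzT
    have hexp : (-(K.card : ℤ)) = (n : ℤ) - (N : ℤ) := by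
      have h := hcards
      omega
    rw [hexp, zpow_sub₀ hzne, zpow_natCast, zpow_natCast, hzκ]
  calc ∑ j ∈ Finset.univ.filter (fun i => 0 < (θ i).re),
        (∏ ℓ ∈ (Finset.univ.filter (fun i => 0 < (θ i).re)).erase j,
            θ ℓ / (θ ℓ - θ j)) *
          θ j ^ (-((Finset.univ.filter (fun i => (θ i).re < 0)).card : ℤ))
      = ∑ z ∈ J, (∏ w ∈ J.erase z, w / (w - z)) * z ^ (-(K.card : ℤ)) := by
        rw [hKcard, ← himage, Finset.sum_image (fun a _ b _ h => hinj h)]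
        refine Finset.sum_congr rfl fun j hj => ?_
        congr 1
        rw [← Finset.image_erase hinj, Finset.prod_image (fun a _ b _ h => hinj h)]
    _ = ∑ z ∈ J, q.eval z * (∏ w ∈ J.erase z, w / (w - z)) / κ := by
        refine Finset.sum_congr rfl fun z hz => ?_
        rw [hstep z hz, heval z hz]
        ring
    _ = (∑ z ∈ J, q.eval z * ∏ w ∈ J.erase z, w / (w - z)) / κ := by
        rw [← Finset.sum_div]
    _ = κ / κ := by rw [lag_eval_zero J q hqdeg, heval0]
    _ = 1 := div_self hκ0
end

section
/- Fix an integer N > 2, set κ_N = (−1)^{1+N/2} if N is even and fix κ_N ∈ {−1,+1} if N is odd. Let θ_1,…,θ_N be the N distinct N-th roots of κ_N, J = {ℓ : Re θ_ℓ > 0}, K = {ℓ : Re θ_ℓ < 0}, and B_k = ∏_{ℓ∈K∖{k}} θ_ℓ/(θ_ℓ − θ_k) for k ∈ K. Then Σ_{k∈K} B_k θ_k^{−#J} = (−1)^{#J}, where #J is the cardinality of J. -/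
open Finset Complex

/-- With `θ_1,…,θ_N` the `N` distinct `N`-th roots of `κ_N`,
`J = {ℓ : Re θ_ℓ > 0}`, `K = {ℓ : Re θ_ℓ < 0}` and
`B_k = ∏_{ℓ∈K∖{k}} θ_ℓ/(θ_ℓ − θ_k)`, one has `Σ_{k∈K} B_k θ_k^{−#J} = (−1)^{#J}`. -/
theorem beta_neg_cardJ (N : ℕ) (hN : 2 < N) (κ : ℂ)
    (hκeven : Even N → κ = (-1 : ℂ) ^ (1 + N / 2))
    (hκodd : ¬ Even N → κ = 1 ∨ κ = -1)
    (θ : Fin N → ℂ) (hinj : Function.Injective θ) (hroot : ∀ i, θ i ^ N = κ) :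
    ∑ k ∈ Finset.univ.filter (fun i => (θ i).re < 0),
        (∏ ℓ ∈ (Finset.univ.filter (fun i => (θ i).re < 0)).erase k,
            θ ℓ / (θ ℓ - θ k)) *
          θ k ^ (-((Finset.univ.filter (fun i => 0 < (θ i).re)).card : ℤ))
      = (-1 : ℂ) ^ ((Finset.univ.filter (fun i => 0 < (θ i).re)).card) := by
  classical
  have hN0 : N ≠ 0 := by omega
  haveI : NeZero N := ⟨hN0⟩
  -- κ = ±1
  have hκ : κ = 1 ∨ κ = -1 := by
    rcases Nat.even_or_odd N with hE | hO
    · rw [hκeven hE]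
      rcases Nat.even_or_odd (1 + N / 2) with h | h
      · left; exact h.neg_one_pow
      · right; exact h.neg_one_pow
    · exact hκodd (Nat.not_even_iff_odd.mpr hO)
  have hκ0 : κ ≠ 0 := by rcases hκ with h | h <;> simp [h]
  have hκconj : (starRingEnd ℂ) κ = κ := by rcases hκ with h | h <;> simp [h]
  have hκsq : κ ^ 2 = 1 := by rcases hκ with h | h <;> simp [h]
  have hθ0 : ∀ i, θ i ≠ 0 := fun i h => hκ0 (by rw [← hroot i, h, zero_pow hN0])
  have habs : ∀ i, ‖θ i‖ = 1 := by
    intro i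
    have h1 : ‖θ i‖ ^ N = 1 := by
      rw [← norm_pow, hroot i]; rcases hκ with h | h <;> simp [h]
    by_contra hne
    rcases lt_or_gt_of_ne hne with h | h
    · have := pow_lt_one₀ (norm_nonneg _) h hN0
      rw [h1] at this; exact lt_irrefl _ this
    · have := one_lt_pow₀ h hN0
      rw [h1] at this; exact lt_irrefl _ this
  have hnsq : ∀ i, (θ i).re ^ 2 + (θ i).im ^ 2 = 1 := by
    intro i
    have := Complex.sq_norm (θ i)
    rw [habs i, Complex.normSq_apply] at this
    nlinarith [this]
  have hre : ∀ i, (θ i).re ≠ 0 := by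
    intro i h0
    have him : (θ i).im ^ 2 = 1 := by have := hnsq i; nlinarith
    have hsq : θ i ^ 2 = -1 := by
      have h1 : (θ i).im * (θ i).im = 1 := by nlinarith
      apply Complex.ext <;>
        simp [pow_two, Complex.mul_re, Complex.mul_im, h0, h1]
    rcases Nat.even_or_odd N with hE | hO
    · obtain ⟨n, hn⟩ := hE
      have h1 : κ = (-1 : ℂ) ^ n := by
        rw [← hroot i, hn, ← two_mul, pow_mul, hsq]
      have h2 : κ = (-1 : ℂ) ^ (1 + n) := by
        rw [hκeven ⟨n, hn⟩]; congr 1; omega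
      rw [h1, pow_add, pow_one] at h2
      have h4 : ((-1 : ℂ)) ^ n ≠ 0 := pow_ne_zero _ (by norm_num)
      apply h4
      linear_combination h2 / 2
    · have h1 : κ ^ 2 = -1 := by
        rw [← hroot i, ← pow_mul, pow_mul', hsq]
        exact hO.neg_one_pow
      rw [hκsq] at h1; norm_num at h1
  -- the two index sets
  set Js : Finset (Fin N) := Finset.univ.filter (fun i => 0 < (θ i).re) with hJs
  set Ks : Finset (Fin N) := Finset.univ.filter (fun i => (θ i).re < 0) with hKs
  have hdisj : Disjoint Js Ks := by
    rw [Finset.disjoint_left]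
    intro i hi hik
    rw [hJs, Finset.mem_filter] at hi
    rw [hKs, Finset.mem_filter] at hik
    linarith [hi.2, hik.2]
  have hunion : Js ∪ Ks = Finset.univ := by
    ext i
    simp only [hJs, hKs, Finset.mem_union, Finset.mem_filter, Finset.mem_univ, true_and,
      iff_true]
    rcases (hre i).lt_or_gt with h | h
    · right; exact h
    · left; exact h
  have hcard : Js.card + Ks.card = N := by
    rw [← Finset.card_union_of_disjoint hdisj, hunion, Finset.card_univ, Fintype.card_fin]
  -- the polynomial X^N - κ and its roots
  set q : Polynomial ℂ := Polynomial.X ^ N - Polynomial.C κ with hq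
  have hqmonic : q.Monic := Polynomial.monic_X_pow_sub_C κ hN0
  have hqdeg : q.natDegree = N := Polynomial.natDegree_X_pow_sub_C
  have hq0 : q ≠ 0 := hqmonic.ne_zero
  set M : Multiset ℂ := Multiset.map θ Finset.univ.val with hM
  have hMnodup : M.Nodup := Multiset.Nodup.map hinj Finset.univ.nodup
  have hMle : M ≤ q.roots := by
    rw [Multiset.le_iff_subset hMnodup]
    intro z hz
    obtain ⟨i, _, rfl⟩ := Multiset.mem_map.mp hz
    rw [Polynomial.mem_roots hq0]
    simp [hq, Polynomial.IsRoot, hroot i]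
  have hMcard : Multiset.card M = N := by simp [hM]
  have hroots : q.roots = M := by
    refine (Multiset.eq_of_le_of_card_le hMle ?_).symm
    rw [hMcard]
    exact hqdeg ▸ q.card_roots'
  have hsplits := IsAlgClosed.splits q
  have hprodall : ∏ i, θ i = (-1 : ℂ) ^ (N + 1) * κ := by
    have h1 := hsplits.coeff_zero_eq_prod_roots_of_monic hqmonic
    have hc : q.coeff 0 = -κ := by
      have e1 : ¬ (0 = N) := by omega
      simp only [hq, Polynomial.coeff_sub, Polynomial.coeff_X_pow, Polynomial.coeff_C_zero,
        if_neg e1]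
      ring
    rw [hc, hroots, hM, hqdeg] at h1
    have h2 : (Multiset.map θ Finset.univ.val).prod = ∏ i, θ i := rfl
    rw [h2] at h1
    have h3 : ((-1 : ℂ) ^ N) * ((-1 : ℂ) ^ N) = 1 := by
      rw [← pow_add]; exact Even.neg_one_pow ⟨N, rfl⟩
    calc ∏ i, θ i = ((-1 : ℂ) ^ N * (-1 : ℂ) ^ N) * ∏ i, θ i := by rw [h3, one_mul]
      _ = (-1 : ℂ) ^ N * ((-1 : ℂ) ^ N * ∏ i, θ i) := by ring
      _ = (-1 : ℂ) ^ N * (-κ) := by rw [← h1]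
      _ = (-1 : ℂ) ^ (N + 1) * κ := by rw [pow_add]; ring
  have hsumall : ∑ i, θ i = 0 := by
    have h1 := hsplits.nextCoeff_eq_neg_sum_roots_of_monic hqmonic
    have hnc : q.nextCoeff = 0 := by
      rw [Polynomial.nextCoeff_of_natDegree_pos (by rw [hqdeg]; omega), hqdeg]
      have e1 : ¬ (N - 1 = N) := by omega
      have e2 : ¬ (N - 1 = 0) := by omega
      simp only [hq, Polynomial.coeff_sub, Polynomial.coeff_X_pow, Polynomial.coeff_C,
        if_neg e1, if_neg e2]
      ring
    rw [hnc, hroots, hM] at h1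
    have h2 : (Multiset.map θ Finset.univ.val).sum = ∑ i, θ i := rfl
    rw [h2] at h1
    linear_combination h1
  have hKne : Ks.Nonempty := by
    by_contra h
    rw [Finset.not_nonempty_iff_eq_empty] at h
    have hJu : Js = Finset.univ := by rw [← hunion, h, Finset.union_empty]
    have hpos : 0 < (∑ i, θ i).re := by
      rw [Complex.re_sum]
      apply Finset.sum_pos
      · intro i _
        have hiJ : i ∈ Js := hJu ▸ Finset.mem_univ i
        rw [hJs, Finset.mem_filter] at hiJ
        exact hiJ.2
      · exact Finset.univ_nonempty
    rw [hsumall] at hpos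
    simp at hpos
  have hsurj : ∀ z : ℂ, z ^ N = κ → ∃ i, θ i = z := by
    intro z hz
    have hzM : z ∈ M := by
      rw [← hroots, Polynomial.mem_roots hq0]
      simp [hq, Polynomial.IsRoot, hz]
    obtain ⟨i, _, hi⟩ := Multiset.mem_map.mp hzM
    exact ⟨i, hi⟩
  -- product over Js is 1
  have hprodJ : ∏ i ∈ Js, θ i = 1 := by
    have hconjroot : ∀ i : Fin N, ((starRingEnd ℂ) (θ i)) ^ N = κ := by
      intro i; rw [← map_pow, hroot i, hκconj]
    choose σ hσ using fun i => hsurj _ (hconjroot i)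
    refine Finset.prod_involution (fun i _ => σ i) ?_ ?_ ?_ ?_
    · intro i _
      rw [hσ i, Complex.mul_conj]
      rw [← Complex.sq_norm, habs i]
      norm_num
    · intro i hi hne heq
      apply hne
      have hfix : (starRingEnd ℂ) (θ i) = θ i := by
        conv_rhs => rw [← heq]
        rw [hσ i]
      have him : (θ i).im = 0 := Complex.conj_eq_iff_im.mp hfix
      have hrepos : 0 < (θ i).re := by
        rw [hJs, Finset.mem_filter] at hi; exact hi.2
      have hre1 : (θ i).re = 1 := by
        have h1 := hnsq i
        rw [him] at h1
        have h2 : ((θ i).re - 1) * ((θ i).re + 1) = 0 := by nlinarith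
        rcases mul_eq_zero.mp h2 with h | h
        · linarith
        · linarith
      apply Complex.ext <;> simp [hre1, him]
    · intro i hi
      show σ i ∈ Js
      rw [hJs, Finset.mem_filter] at hi
      rw [hJs, Finset.mem_filter]
      refine ⟨Finset.mem_univ _, ?_⟩
      rw [hσ i]
      simpa using hi.2
    · intro i hi
      apply hinj
      rw [hσ, hσ, Complex.conj_conj]
  -- abbreviations for Lagrange interpolation
  set m := Ks.card with hm
  have hmpos : 0 < m := Finset.card_pos.mpr hKne
  set p : Polynomial ℂ := ∏ ℓ ∈ Ks, (Polynomial.X - Polynomial.C (θ ℓ)) with hp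
  have hpmonic : p.Monic :=
    Polynomial.monic_prod_of_monic _ _ (fun ℓ _ => Polynomial.monic_X_sub_C _)
  have hpdeg : p.natDegree = m := by
    rw [hp, Polynomial.natDegree_prod _ _ (fun ℓ _ => Polynomial.X_sub_C_ne_zero _)]
    simp [Polynomial.natDegree_X_sub_C, hm]
  set f : Polynomial ℂ := Polynomial.X ^ m - p with hf
  have hfdeg : f.degree < (m : WithBot ℕ) := by
    have h1 : (Polynomial.X ^ m : Polynomial ℂ).degree = (m : WithBot ℕ) :=
      Polynomial.degree_X_pow m
    have h2 : p.degree = (m : WithBot ℕ) := by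
      rw [Polynomial.degree_eq_natDegree hpmonic.ne_zero, hpdeg]
    have h3 : (Polynomial.X ^ m - p).degree < (Polynomial.X ^ m : Polynomial ℂ).degree := by
      apply Polynomial.degree_sub_lt
      · rw [h1, h2]
      · exact pow_ne_zero _ Polynomial.X_ne_zero
      · rw [Polynomial.leadingCoeff_X_pow, hpmonic.leadingCoeff]
    rw [hf]
    rw [h1] at h3
    exact h3
    -- Lagrange interpolation identity
  have hvs : Set.InjOn θ ↑Ks := hinj.injOn
  have hinterp : f = (Lagrange.interpolate Ks θ) fun i => Polynomial.eval (θ i) f :=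
    Lagrange.eq_interpolate hvs hfdeg
  have hpevalK : ∀ k ∈ Ks, Polynomial.eval (θ k) p = 0 := by
    intro k hk
    rw [hp, Polynomial.eval_prod]
    apply Finset.prod_eq_zero hk
    simp
  have hkey : ∑ k ∈ Ks, (θ k ^ m) * ∏ ℓ ∈ Ks.erase k, (θ ℓ / (θ ℓ - θ k))
      = - ∏ ℓ ∈ Ks, (-θ ℓ) := by
    have heval := congrArg (Polynomial.eval 0) hinterp
    rw [Lagrange.interpolate_apply, Polynomial.eval_finset_sum] at heval
    have hL : Polynomial.eval 0 f = - ∏ ℓ ∈ Ks, (-θ ℓ) := by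
      rw [hf]
      simp only [Polynomial.eval_sub, Polynomial.eval_pow, Polynomial.eval_X]
      rw [zero_pow hmpos.ne', hp, Polynomial.eval_prod]
      simp only [Polynomial.eval_sub, Polynomial.eval_X, Polynomial.eval_C, zero_sub]
    calc ∑ k ∈ Ks, (θ k ^ m) * ∏ ℓ ∈ Ks.erase k, (θ ℓ / (θ ℓ - θ k))
        = ∑ k ∈ Ks, Polynomial.eval 0
            (Polynomial.C (Polynomial.eval (θ k) f) * Lagrange.basis Ks θ k) := by
          apply Finset.sum_congr rfl
          intro k hk
          rw [Polynomial.eval_mul, Polynomial.eval_C]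
          congr 1
          · rw [hf]
            simp [Polynomial.eval_sub, Polynomial.eval_pow, hpevalK k hk]
          · rw [Lagrange.basis, Polynomial.eval_prod]
            apply Finset.prod_congr rfl
            intro j hj
            rw [Lagrange.basisDivisor]
            simp only [Polynomial.eval_mul, Polynomial.eval_C, Polynomial.eval_sub,
              Polynomial.eval_X]
            rw [div_eq_mul_inv, ← neg_sub (θ k) (θ j), inv_neg]
            ring
      _ = Polynomial.eval 0 f := heval.symm
      _ = - ∏ ℓ ∈ Ks, (-θ ℓ) := hL
  -- rewrite the negative power
  have hzpow : ∀ k ∈ Ks, θ k ^ (-(Js.card : ℤ)) = θ k ^ m * κ⁻¹ := by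
    intro k _
    have h1 : (-(Js.card : ℤ)) = (m : ℤ) - (N : ℤ) := by omega
    rw [h1, zpow_sub₀ (hθ0 k), zpow_natCast, zpow_natCast, hroot k, div_eq_mul_inv]
  have hprodK : ∏ i ∈ Ks, θ i = (-1 : ℂ) ^ (N + 1) * κ := by
    have h1 : (∏ i ∈ Js, θ i) * ∏ i ∈ Ks, θ i = ∏ i, θ i := by
      rw [← Finset.prod_union hdisj, hunion]
    rw [hprodJ, one_mul] at h1
    rw [h1, hprodall]
  have hneg : ∏ ℓ ∈ Ks, (-θ ℓ) = (-1 : ℂ) ^ m * ∏ ℓ ∈ Ks, θ ℓ := by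
    calc ∏ ℓ ∈ Ks, (-θ ℓ) = ∏ ℓ ∈ Ks, ((-1) * θ ℓ) := by simp [neg_one_mul]
      _ = (∏ ℓ ∈ Ks, (-1 : ℂ)) * ∏ ℓ ∈ Ks, θ ℓ := Finset.prod_mul_distrib
      _ = (-1 : ℂ) ^ m * ∏ ℓ ∈ Ks, θ ℓ := by rw [Finset.prod_const]
  calc ∑ k ∈ Ks, (∏ ℓ ∈ Ks.erase k, θ ℓ / (θ ℓ - θ k)) * θ k ^ (-(Js.card : ℤ))
      = (∑ k ∈ Ks, (θ k ^ m) * ∏ ℓ ∈ Ks.erase k, (θ ℓ / (θ ℓ - θ k))) * κ⁻¹ := by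
        rw [Finset.sum_mul]
        apply Finset.sum_congr rfl
        intro k hk
        rw [hzpow k hk]
        ring
    _ = (- ∏ ℓ ∈ Ks, (-θ ℓ)) * κ⁻¹ := by rw [hkey]
    _ = (-((-1 : ℂ) ^ m * ((-1 : ℂ) ^ (N + 1) * κ))) * κ⁻¹ := by rw [hneg, hprodK]
    _ = (-((-1 : ℂ) ^ m * (-1 : ℂ) ^ (N + 1))) * (κ * κ⁻¹) := by ring
    _ = -((-1 : ℂ) ^ m * (-1 : ℂ) ^ (N + 1)) := by rw [mul_inv_cancel₀ hκ0, mul_one]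
    _ = (-1 : ℂ) ^ Js.card := by
        have hNe : m + (N + 1) + 1 = Js.card + 2 * (m + 1) := by omega
        calc -((-1 : ℂ) ^ m * (-1 : ℂ) ^ (N + 1)) = (-1 : ℂ) ^ (m + (N + 1) + 1) := by
              rw [pow_add, pow_add, pow_one]; ring
          _ = (-1 : ℂ) ^ Js.card * ((-1 : ℂ) ^ 2) ^ (m + 1) := by rw [hNe, pow_add, pow_mul]
          _ = (-1 : ℂ) ^ Js.card := by norm_num
end
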